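/- For positive integers r1, r2 and k with 1 ≤ k ≤ r1 + r2, the coefficient c_k(r1,r2;q) := ([r1+r2]_q/[k]_q) · Σ_{j=0}^k (-1)^{k-j} [k choose j]_q q^{C(k-j,2)} [j+r1-1 choose r1]_q [j+r2-1 choose r2]_q satisfies c_k(r1,r2;q) = q^{k(k-1) - r1·r2} · (r1+r2 choose r1,k)_q, where (n choose p,k)_q = ([n]_q/[k]_q) · Σ_{r≥0} [p choose r]_q [n-p choose r]_q [n-r-1 choose k-r-1]_q q^{(n-p)p + r(r-k)} and C(a,2) = a(a-1)/2. -/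

import Mathlib

open Finset

/-- The variable `q`, as a rational function over `ℚ`. -/
noncomputable def q : RatFunc ℚ := RatFunc.X

/-- The q-integer `[m]_q = (1 - q^m)/(1 - q)`. -/
noncomputable def qint (m : ℕ) : RatFunc ℚ := (1 - q ^ m) / (1 - q)

/-- The q-integer for an integer exponent, `[x; q] = (q^x - 1)/(q - 1)`. -/
noncomputable def qintZ (x : ℤ) : RatFunc ℚ := (q ^ x - 1) / (q - 1)

/-- The q-factorial `[m]!_q`. -/
noncomputable def qfac (m : ℕ) : RatFunc ℚ := ∏ i ∈ Finset.range m, qint (i + 1)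

/-- The Gaussian q-binomial coefficient `[a choose b]_q`, zero when `b < 0` or `b > a`. -/
noncomputable def qbin (a b : ℤ) : RatFunc ℚ :=
  if 0 ≤ b ∧ b ≤ a then qfac a.toNat / (qfac b.toNat * qfac (a - b).toNat) else 0

/-- The first generalized q-binomial coefficient `(n choose p, k)_q`:
`([n]_q/[k]_q) · Σ_{r≥0} [p choose r]_q [n-p choose r]_q [n-r-1 choose k-r-1]_q
  q^{(n-p)p + r(r-k)}`. -/
noncomputable def gchoose (n p k : ℕ) : RatFunc ℚ :=
  (qint n / qint k) *
    ∑ r ∈ Finset.range (n + 1),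
      qbin p r * qbin ((n : ℤ) - p) r * qbin ((n : ℤ) - r - 1) ((k : ℤ) - r - 1) *
        q ^ (((n : ℤ) - p) * p + (r : ℤ) * ((r : ℤ) - k))


lemma q_ne_zero : q ≠ 0 := RatFunc.X_ne_zero

lemma q_pow_ne_one {m : ℕ} (hm : m ≠ 0) : q ^ m ≠ 1 := by
  intro h
  have hX : (RatFunc.X : RatFunc ℚ) = algebraMap (Polynomial ℚ) _ Polynomial.X :=
    (RatFunc.algebraMap_X).symm
  have : algebraMap (Polynomial ℚ) (RatFunc ℚ) (Polynomial.X ^ m) =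
      algebraMap (Polynomial ℚ) (RatFunc ℚ) 1 := by
    rw [map_pow, map_one, ← hX]; exact h
  have h2 := RatFunc.algebraMap_injective ℚ this
  have := congrArg Polynomial.natDegree h2
  simp [Polynomial.natDegree_X_pow] at this
  exact hm this

lemma one_sub_q_pow_ne_zero {m : ℕ} (hm : m ≠ 0) : (1 : RatFunc ℚ) - q ^ m ≠ 0 := by
  intro h; exact q_pow_ne_one hm (by linear_combination -h)

lemma one_sub_q_ne_zero : (1 : RatFunc ℚ) - q ≠ 0 := by
  simpa using one_sub_q_pow_ne_zero (m := 1) one_ne_zero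

lemma qint_ne_zero {m : ℕ} (hm : m ≠ 0) : qint m ≠ 0 :=
  div_ne_zero (one_sub_q_pow_ne_zero hm) one_sub_q_ne_zero

lemma qfac_ne_zero (m : ℕ) : qfac m ≠ 0 := by
  unfold qfac
  exact Finset.prod_ne_zero_iff.2 fun i _ => qint_ne_zero (Nat.succ_ne_zero i)

lemma qint_zero : qint 0 = 0 := by simp [qint]

lemma qfac_succ (m : ℕ) : qfac (m + 1) = qfac m * qint (m + 1) := by
  simp [qfac, Finset.prod_range_succ]

-- key scalar lemma
lemma qint_add (u v : ℕ) : qint (u + v) = qint u + q ^ u * qint v := by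
  simp only [qint]
  rw [pow_add]
  field_simp
  ring

lemma qbin_nat (a b : ℕ) (h : b ≤ a) :
    qbin a b = qfac a / (qfac b * qfac (a - b)) := by
  have h1 : ((a : ℤ) - b).toNat = a - b := by omega
  have hc : (0:ℤ) ≤ (b:ℤ) ∧ (b:ℤ) ≤ (a:ℤ) := ⟨by positivity, by exact_mod_cast h⟩
  simp only [qbin, if_pos hc, Int.toNat_natCast, h1]

lemma qfac_zero : qfac 0 = 1 := by simp [qfac]

lemma qbin_zero_of_not (a b : ℤ) (h : ¬ (0 ≤ b ∧ b ≤ a)) : qbin a b = 0 := if_neg h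

lemma qbin_zero_of_lt {a b : ℤ} (h : a < b) : qbin a b = 0 :=
  qbin_zero_of_not a b (by omega)

lemma qbin_zero_of_neg {a b : ℤ} (h : b < 0) : qbin a b = 0 :=
  qbin_zero_of_not a b (by omega)

lemma qbin_self {a : ℤ} (h : 0 ≤ a) : qbin a a = 1 := by
  have hc : (0:ℤ) ≤ a ∧ a ≤ a := ⟨h, le_refl a⟩
  simp only [qbin, if_pos hc, sub_self, Int.toNat_zero]
  rw [qfac_zero, mul_one, div_self (qfac_ne_zero _)]

lemma qbin_zero_right {a : ℤ} (h : 0 ≤ a) : qbin a 0 = 1 := by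
  have hc : (0:ℤ) ≤ (0:ℤ) ∧ (0:ℤ) ≤ a := ⟨le_refl 0, h⟩
  simp only [qbin, if_pos hc, Int.toNat_zero, sub_zero]
  rw [qfac_zero, one_mul, div_self (qfac_ne_zero _)]

lemma qbin_symm (a b : ℤ) : qbin a b = qbin a (a - b) := by
  by_cases h : 0 ≤ b ∧ b ≤ a
  · have h2 : 0 ≤ a - b ∧ a - b ≤ a := by omega
    simp only [qbin, if_pos h, if_pos h2]
    rw [show a - (a - b) = b by ring, mul_comm]
  · rw [qbin_zero_of_not a b h, qbin_zero_of_not a (a - b) (by omega)]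

lemma pascal1 (a b : ℕ) :
    qbin (↑(a + 1)) b = qbin a ((b : ℤ) - 1) + q ^ b * qbin a b := by
  rcases b with _ | c
  · rw [show ((0:ℕ):ℤ) = (0:ℤ) by norm_num, qbin_zero_right (by positivity),
      qbin_zero_of_neg (by norm_num), qbin_zero_right (by positivity)]
    simp
  · have hc : ((c + 1 : ℕ) : ℤ) - 1 = (c : ℤ) := by push_cast; ring
    by_cases hba : c + 1 ≤ a + 1
    · rw [hc]
      by_cases hba2 : c + 1 ≤ a
      · obtain ⟨d, rfl⟩ : ∃ d, a = c + 1 + d := ⟨a - (c+1), by omega⟩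
        rw [qbin_nat _ _ hba, qbin_nat _ _ (by omega), qbin_nat _ _ hba2,
          show c + 1 + d + 1 - (c + 1) = d + 1 by omega,
          show c + 1 + d - c = d + 1 by omega,
          show c + 1 + d - (c + 1) = d by omega,
          show c + 1 + d + 1 = (c + 1 + d) + 1 by ring, qfac_succ (c + 1 + d),
          qfac_succ c, qfac_succ d]
        have key := qint_add (c + 1) (d + 1)
        rw [show c + 1 + (d + 1) = c + 1 + d + 1 by omega] at key
        have n1 := qfac_ne_zero c
        have n2 := qfac_ne_zero d
        have n3 := qint_ne_zero (Nat.succ_ne_zero c)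
        have n4 := qint_ne_zero (Nat.succ_ne_zero d)
        have n5 := qfac_ne_zero (c + 1 + d)
        field_simp
        linear_combination key
      · have hca : c = a := by omega
        subst hca
        rw [show ((c+1:ℕ):ℤ) = ((c:ℤ))+1 by push_cast; ring, qbin_self (by positivity),
          qbin_self (by positivity), qbin_zero_of_lt (by omega)]
        simp
    · rw [qbin_zero_of_lt (by exact_mod_cast by omega : (↑(a+1) : ℤ) < ↑(c+1)),
        qbin_zero_of_lt (by push_cast; omega : (a : ℤ) < (↑(c+1) : ℤ) - 1),
        qbin_zero_of_lt (by exact_mod_cast by omega : (a : ℤ) < ↑(c+1))]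
      simp

lemma pascal2Z (a : ℤ) (b : ℕ) (hb : 1 ≤ b) :
    qbin a b = q ^ (a - b) * qbin (a - 1) ((b : ℤ) - 1) + qbin (a - 1) b := by
  by_cases hba : (b : ℤ) ≤ a
  · obtain ⟨A, rfl⟩ : ∃ A : ℕ, a = (A : ℤ) := ⟨a.toNat, by omega⟩
    obtain ⟨c, rfl⟩ : ∃ c, b = c + 1 := ⟨b - 1, by omega⟩
    by_cases hba2 : (c : ℤ) + 2 ≤ A
    · obtain ⟨d, rfl⟩ : ∃ d, A = c + 2 + d := ⟨A - (c + 2), by omega⟩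
      rw [show ((c + 2 + d : ℕ) : ℤ) - 1 = ((c + 1 + d : ℕ) : ℤ) by push_cast; ring,
        show ((c + 1 : ℕ) : ℤ) - 1 = ((c : ℕ) : ℤ) by push_cast; ring,
        show ((c + 2 + d : ℕ) : ℤ) - ((c + 1 : ℕ) : ℤ) = ((d + 1 : ℕ) : ℤ) by push_cast; ring,
        zpow_natCast,
        qbin_nat _ _ (by omega), qbin_nat _ _ (by omega), qbin_nat _ _ (by omega),
        show c + 2 + d - (c + 1) = d + 1 by omega,
        show c + 1 + d - c = d + 1 by omega,
        show c + 1 + d - (c + 1) = d by omega,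
        show c + 2 + d = (c + 1 + d) + 1 by ring, qfac_succ (c + 1 + d),
        qfac_succ c, qfac_succ d]
      have key := qint_add (d + 1) (c + 1)
      rw [show d + 1 + (c + 1) = c + 1 + d + 1 by omega] at key
      have n1 := qfac_ne_zero c
      have n2 := qfac_ne_zero d
      have n3 := qint_ne_zero (Nat.succ_ne_zero c)
      have n4 := qint_ne_zero (Nat.succ_ne_zero d)
      have n5 := qfac_ne_zero (c + 1 + d)
      field_simp
      linear_combination key
    · have hA : (A : ℤ) = (c : ℤ) + 1 := by omega
      rw [hA, show ((c+1:ℕ):ℤ) = (c:ℤ) + 1 by push_cast; ring,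
        show ((c:ℤ) + 1) - ((c:ℤ) + 1) = 0 by ring,
        show ((c:ℤ) + 1) - 1 = (c : ℤ) by ring,
        qbin_self (by positivity), qbin_self (by positivity),
        qbin_zero_of_lt (by omega)]
      simp
  · rw [qbin_zero_of_lt (by omega), qbin_zero_of_lt (by omega),
      qbin_zero_of_lt (by omega)]
    simp

lemma ab1 (a b : ℕ) :
    qbin (↑(a + 1)) ↑b * qint (a + 1 - b) = qint (a + 1) * qbin ↑a ↑b := by
  by_cases hba : b ≤ a
  · obtain ⟨d, rfl⟩ : ∃ d, a = b + d := ⟨a - b, by omega⟩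
    rw [qbin_nat _ _ (by omega), qbin_nat _ _ (by omega),
      show b + d + 1 - b = d + 1 by omega, show b + d - b = d by omega,
      show b + d + 1 = (b + d) + 1 by ring, qfac_succ (b + d), qfac_succ d]
    have n1 := qfac_ne_zero b
    have n2 := qfac_ne_zero d
    have n3 := qint_ne_zero (Nat.succ_ne_zero d)
    field_simp
  · by_cases hb1 : b = a + 1
    · subst hb1
      rw [Nat.sub_self, qint_zero, mul_zero, qbin_zero_of_lt (by exact_mod_cast by omega)]
      simp
    · rw [qbin_zero_of_lt (by exact_mod_cast by omega : ((a+1:ℕ):ℤ) < (b:ℤ)),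
        qbin_zero_of_lt (by exact_mod_cast by omega : ((a:ℕ):ℤ) < (b:ℤ))]
      simp

lemma ab2 (p r : ℕ) :
    qbin ↑p ↑(r + 1) * qint (r + 1) = qbin ↑p ↑r * qint (p - r) := by
  by_cases hrp : r + 1 ≤ p
  · obtain ⟨d, rfl⟩ : ∃ d, p = r + 1 + d := ⟨p - (r + 1), by omega⟩
    rw [qbin_nat _ _ (by omega), qbin_nat _ _ (by omega),
      show r + 1 + d - (r + 1) = d by omega, show r + 1 + d - r = d + 1 by omega,
      qfac_succ r, qfac_succ d]
    have n1 := qfac_ne_zero r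
    have n2 := qfac_ne_zero d
    have n3 := qint_ne_zero (Nat.succ_ne_zero r)
    have n4 := qint_ne_zero (Nat.succ_ne_zero d)
    field_simp
  · by_cases hrp2 : r = p
    · subst hrp2
      rw [Nat.sub_self, qint_zero, mul_zero, qbin_zero_of_lt (by exact_mod_cast by omega)]
      simp
    · rw [qbin_zero_of_lt (by exact_mod_cast by omega : ((p:ℕ):ℤ) < ((r+1:ℕ):ℤ)),
        qbin_zero_of_lt (by exact_mod_cast by omega : ((p:ℕ):ℤ) < ((r:ℕ):ℤ))]
      simp

lemma tri_succ (i : ℕ) : (i + 1) * i / 2 = i * (i - 1) / 2 + i := by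
  rw [show (i + 1) * i / 2 = (i+1) * ((i+1) - 1) / 2 by norm_num,
    ← Nat.choose_two_right, ← Nat.choose_two_right, Nat.choose_succ_succ]
  simp [Nat.choose_one_right, Nat.add_comm]

lemma Wlem (n k : ℕ) (hk : k ≤ n) (m : ℤ) :
    ∑ j ∈ range (k + 1), (-1 : RatFunc ℚ) ^ (k - j) * qbin k j *
        q ^ ((k - j) * (k - j - 1) / 2) * qbin ((j : ℤ) + m) n =
      q ^ ((k : ℤ) * (m + k - n)) * qbin m ((n : ℤ) - k) := by
  induction k generalizing m with
  | zero =>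
    simp [show qbin 0 0 = 1 from qbin_self le_rfl]
  | succ k IH =>
    have hkn : k + 1 ≤ n := hk
    have hsplit : ∀ j ∈ range (k + 2),
        (-1 : RatFunc ℚ) ^ (k + 1 - j) * qbin (↑(k+1)) j *
            q ^ ((k + 1 - j) * (k + 1 - j - 1) / 2) * qbin ((j : ℤ) + m) n =
          ((-1 : RatFunc ℚ) ^ (k + 1 - j) * qbin (↑k) ((j:ℤ) - 1) *
            q ^ ((k + 1 - j) * (k + 1 - j - 1) / 2) * qbin ((j : ℤ) + m) n)
          + ((-1 : RatFunc ℚ) ^ (k + 1 - j) * (q ^ j * qbin (↑k) j) *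
            q ^ ((k + 1 - j) * (k + 1 - j - 1) / 2) * qbin ((j : ℤ) + m) n) := by
      intro j _
      rw [pascal1 k j]
      ring
    rw [Finset.sum_congr rfl hsplit, Finset.sum_add_distrib]
    -- first sum: reindex
    have hA : ∑ j ∈ range (k + 2), ((-1 : RatFunc ℚ) ^ (k + 1 - j) * qbin (↑k) ((j:ℤ) - 1) *
            q ^ ((k + 1 - j) * (k + 1 - j - 1) / 2) * qbin ((j : ℤ) + m) n)
        = ∑ i ∈ range (k + 1), ((-1 : RatFunc ℚ) ^ (k - i) * qbin (↑k) (↑i) *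
            q ^ ((k - i) * (k - i - 1) / 2) * qbin ((i : ℤ) + (m + 1)) n) := by
      rw [Finset.sum_range_succ' _ (k + 1)]
      have h0 : qbin (↑k) (((0:ℕ):ℤ) - 1) = 0 := qbin_zero_of_neg (by norm_num)
      rw [h0]
      simp only [zero_mul, mul_zero, add_zero]
      apply Finset.sum_congr rfl
      intro i _
      have e1 : k + 1 - (i + 1) = k - i := by omega
      have e2 : ((i + 1 : ℕ) : ℤ) - 1 = (i : ℤ) := by push_cast; ring
      have e3 : ((i + 1 : ℕ) : ℤ) + m = (i : ℤ) + (m + 1) := by push_cast; ring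
      rw [e1, e2, e3]
    rw [hA, IH (by omega) (m + 1)]
    -- second sum
    have hB : ∑ j ∈ range (k + 2), ((-1 : RatFunc ℚ) ^ (k + 1 - j) * (q ^ j * qbin (↑k) j) *
            q ^ ((k + 1 - j) * (k + 1 - j - 1) / 2) * qbin ((j : ℤ) + m) n)
        = -(q ^ k * (q ^ ((k : ℤ) * (m + k - n)) * qbin m ((n : ℤ) - k))) := by
      rw [Finset.sum_range_succ]
      have hlast : (-1 : RatFunc ℚ) ^ (k + 1 - (k+1)) * (q ^ (k+1) * qbin (↑k) (↑(k+1))) *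
          q ^ ((k + 1 - (k+1)) * (k + 1 - (k+1) - 1) / 2) * qbin (((k+1 : ℕ)) + m) n = 0 := by
        rw [qbin_zero_of_lt (by exact_mod_cast by omega)]
        ring
      rw [hlast, add_zero, ← IH (by omega) m, Finset.mul_sum, ← Finset.sum_neg_distrib]
      apply Finset.sum_congr rfl
      intro j hj
      have hjk : j ≤ k := by simpa using Nat.lt_succ_iff.mp (Finset.mem_range.mp hj)
      have e1 : k + 1 - j = (k - j) + 1 := by omega
      have e2 : ((k-j) + 1) * ((k-j) + 1 - 1) / 2 = (k - j) * (k - j - 1) / 2 + (k - j) := by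
        simpa using tri_succ (k - j)
      rw [e1, e2, pow_succ, pow_add]
      have e3 : q ^ (k - j) * q ^ j = q ^ k := by
        rw [← pow_add, Nat.sub_add_cancel hjk]
      linear_combination (-(q ^ ((k - j) * (k - j - 1) / 2) * qbin (↑k) (↑j) *
        qbin ((↑j) + m) (↑n) * (-1 : RatFunc ℚ) ^ (k - j))) * e3
    rw [hB]
    -- combine
    rw [show (n:ℤ) - (k:ℤ) = ((n-k:ℕ):ℤ) by omega]
    rw [pascal2Z (m + 1) (n - k) (by omega)]
    rw [show ((n - k : ℕ) : ℤ) = (n : ℤ) - k by omega,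
      show (q ^ k : RatFunc ℚ) = q ^ (k:ℤ) from (zpow_natCast q k).symm,
      show (n : ℤ) - k - 1 = (n:ℤ) - ↑(k+1) by push_cast; ring,
      show (m + 1) - 1 = m by ring]
    rw [show ((k:ℤ) * (m + 1 + k - n)) = ((k:ℤ) * (m + k - n)) + k by ring]
    rw [zpow_add₀ q_ne_zero ((k:ℤ) * (m + k - n)) (k:ℤ)]
    rw [show ((k+1:ℕ):ℤ) * (m + ↑(k+1) - n) = (((k:ℤ) * (m + k - n)) + k) + ((m + 1) - ((n:ℤ) - k)) by push_cast; ring]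
    rw [zpow_add₀ q_ne_zero (((k:ℤ) * (m + k - n)) + k) ((m + 1) - ((n:ℤ) - k))]
    rw [zpow_add₀ q_ne_zero ((k:ℤ) * (m + k - n)) (k:ℤ)]
    ring

lemma sc' (t r p p2 : ℕ) (h1 : r ≤ p) (h2 : r ≤ p2) :
    qint (r+t+1)^2 * qint (t+p+p2+1) - qint (r+t+1+p) * qint (r+t+1+p2) * qint (t+1)
      + q^(2*r+t+1) * qint (p-r) * qint (p2-r) * qint (t+1)
      - q^(t+1) * qint r^2 * qint (t+p+p2+1) = 0 := by
  obtain ⟨u, rfl⟩ : ∃ u, p = r + u := ⟨p - r, by omega⟩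
  obtain ⟨v, rfl⟩ : ∃ v, p2 = r + v := ⟨p2 - r, by omega⟩
  rw [show r + u - r = u by omega, show r + v - r = v by omega]
  simp only [qint]

  field_simp
  ring

lemma cert (p p2 r j : ℕ) (hj : 1 ≤ j) :
    qint j ^ 2 * (q^(r*r) * qbin ↑p ↑r * qbin ↑p2 ↑r *
        qbin ((j:ℤ) + 1 + ↑p + ↑p2 - ↑r - 1) (↑p + ↑p2))
      - qint (j+p) * qint (j+p2) * (q^(r*r) * qbin ↑p ↑r * qbin ↑p2 ↑r *
        qbin ((j:ℤ) + ↑p + ↑p2 - ↑r - 1) (↑p + ↑p2))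
    = (-(q^(j + (r+1)*r) * qint (r+1) ^ 2 * qbin ↑p ((r:ℤ) + 1) * qbin ↑p2 ((r:ℤ) + 1) *
        qbin ((j:ℤ) + ↑p + ↑p2 - ↑r - 1) (↑p + ↑p2)))
      - (-(q^(j + r*(r-1)) * qint r ^ 2 * qbin ↑p ↑r * qbin ↑p2 ↑r *
        qbin ((j:ℤ) + ↑p + ↑p2 - ↑r) (↑p + ↑p2))) := by
  by_cases hrp : r ≤ p ∧ r ≤ p2
  · obtain ⟨hrp1, hrp2⟩ := hrp
    by_cases hrj : r + 1 ≤ j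
    · -- main case
      obtain ⟨t, rfl⟩ : ∃ t, j = r + t + 1 := ⟨j - r - 1, by omega⟩
      have hab1 := ab1 (t+p+p2) (p+p2)
      rw [show t+p+p2+1-(p+p2) = t+1 by omega] at hab1
      have hab2p := ab2 p r
      have hab2q := ab2 p2 r
      have hsc := sc' t r p p2 hrp1 hrp2
      rw [show ((r+t+1:ℕ) : ℤ) + 1 + ↑p + ↑p2 - ↑r - 1 = ((t+p+p2+1 : ℕ) : ℤ) by push_cast; ring,
        show ((r+t+1:ℕ) : ℤ) + ↑p + ↑p2 - ↑r - 1 = ((t+p+p2 : ℕ) : ℤ) by push_cast; ring,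
        show ((r+t+1:ℕ) : ℤ) + ↑p + ↑p2 - ↑r = ((t+p+p2+1 : ℕ) : ℤ) by push_cast; ring,
        show ((p:ℤ) + ↑p2) = ((p+p2 : ℕ):ℤ) by push_cast; ring,
        show ((r:ℤ) + 1) = ((r+1:ℕ):ℤ) by push_cast; ring,
        show (r+t+1) + (r+1)*r = t+1+(r*r+2*r) by ring,
        show (r+t+1) + r*(r-1) = t+1+r*r by
          (cases r with
          | zero => simp
          | succ s => simp only [Nat.succ_sub_one]; ring)]
      apply mul_right_cancel₀ (b := qint (t+1)) (qint_ne_zero (Nat.succ_ne_zero t))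
      linear_combination
        (qint (r+t+1)^2 * q^(r*r) * qbin ↑p ↑r * qbin ↑p2 ↑r
          - q^(t+1+r*r) * qint r^2 * qbin ↑p ↑r * qbin ↑p2 ↑r) * hab1
        + (q^(t+1+r*r+2*r) * qbin (↑(t+p+p2)) (↑(p+p2)) * qint (t+1) * qint (r+1) *
            qbin ↑p2 (↑(r+1))) * hab2p
        + (q^(t+1+r*r+2*r) * qbin (↑(t+p+p2)) (↑(p+p2)) * qint (t+1) * qbin ↑p ↑r *
            qint (p-r)) * hab2q
        + (q^(r*r) * qbin ↑p ↑r * qbin ↑p2 ↑r * qbin (↑(t+p+p2)) (↑(p+p2))) * hsc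
    · by_cases hrj2 : r = j
      · subst hrj2
        rw [show ((r:ℕ) : ℤ) + 1 + ↑p + ↑p2 - ↑r - 1 = ((p:ℤ) + ↑p2) by push_cast; ring,
          qbin_self (by positivity),
          qbin_zero_of_lt (show ((r:ℕ):ℤ) + ↑p + ↑p2 - ↑r - 1 < (p:ℤ) + ↑p2 by omega),
          show ((r:ℕ) : ℤ) + ↑p + ↑p2 - ↑r = ((p:ℤ) + ↑p2) by push_cast; ring,
          qbin_self (by positivity),
          show r + r*(r-1) = r*r by
            (cases r with
            | zero => simp
            | succ s => simp only [Nat.succ_sub_one]; ring)]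
        ring
      · -- r ≥ j + 1 : all big binomials vanish
        have h1 : ((j:ℕ) : ℤ) + 1 + ↑p + ↑p2 - ↑r - 1 < (p:ℤ) + ↑p2 := by
          push_cast; omega
        have h2 : ((j:ℕ) : ℤ) + ↑p + ↑p2 - ↑r - 1 < (p:ℤ) + ↑p2 := by push_cast; omega
        have h3 : ((j:ℕ) : ℤ) + ↑p + ↑p2 - ↑r < (p:ℤ) + ↑p2 := by push_cast; omega
        rw [qbin_zero_of_lt h1, qbin_zero_of_lt h2, qbin_zero_of_lt h3]
        ring
  · rcases not_and_or.mp hrp with h | h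
    · rw [qbin_zero_of_lt (show ((p:ℕ):ℤ) < (r:ℤ) by exact_mod_cast by omega),
        qbin_zero_of_lt (show ((p:ℕ):ℤ) < (r:ℤ) + 1 by push_cast; omega)]
      ring
    · rw [qbin_zero_of_lt (show ((p2:ℕ):ℤ) < (r:ℤ) by exact_mod_cast by omega),
        qbin_zero_of_lt (show ((p2:ℕ):ℤ) < (r:ℤ) + 1 by push_cast; omega)]
      ring

lemma saal (p p2 : ℕ) (hp : 1 ≤ p) (hp2 : 1 ≤ p2) (j : ℕ) :
    qbin ((j:ℤ) + ↑p - 1) ↑p * qbin ((j:ℤ) + ↑p2 - 1) ↑p2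
      = ∑ r ∈ range (p+p2+1), q^(r*r) * qbin ↑p ↑r * qbin ↑p2 ↑r *
          qbin ((j:ℤ) + ↑p + ↑p2 - ↑r - 1) (↑p + ↑p2) := by
  induction j with
  | zero =>
    rw [qbin_zero_of_lt (show ((0:ℕ):ℤ) + ↑p - 1 < (p:ℤ) by push_cast; omega)]
    rw [zero_mul, eq_comm]
    apply Finset.sum_eq_zero
    intro r _
    rw [qbin_zero_of_lt (show ((0:ℕ):ℤ) + ↑p + ↑p2 - ↑r - 1 < (p:ℤ) + ↑p2 by push_cast; omega)]
    ring
  | succ j IH =>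
    rcases Nat.eq_zero_or_pos j with rfl | hj
    · -- j + 1 = 1
      rw [show ((1:ℕ):ℤ) + ↑p - 1 = (p:ℤ) by push_cast; ring,
        show ((1:ℕ):ℤ) + ↑p2 - 1 = (p2:ℤ) by push_cast; ring,
        qbin_self (by positivity), qbin_self (by positivity), eq_comm]
      rw [Finset.sum_eq_single 0]
      · rw [show ((1:ℕ):ℤ) + ↑p + ↑p2 - ↑(0:ℕ) - 1 = (p:ℤ) + ↑p2 by push_cast; ring,
          qbin_self (by positivity), show ((0:ℕ):ℤ) = (0:ℤ) by norm_num,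
          qbin_zero_right (by positivity), qbin_zero_right (by positivity)]
        norm_num
      · intro r _ hr
        rw [qbin_zero_of_lt (show ((1:ℕ):ℤ) + ↑p + ↑p2 - ↑r - 1 < (p:ℤ) + ↑p2 by
          push_cast; omega)]
        ring
      · intro h
        exact absurd (Finset.mem_range.mpr (by omega)) h
    · -- inductive step, j ≥ 1
      have hj1 : 1 ≤ j := hj
      have key : ∑ r ∈ range (p+p2+1),
          (qint j ^ 2 * (q^(r*r) * qbin ↑p ↑r * qbin ↑p2 ↑r *
              qbin ((j:ℤ) + 1 + ↑p + ↑p2 - ↑r - 1) (↑p + ↑p2))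
            - qint (j+p) * qint (j+p2) * (q^(r*r) * qbin ↑p ↑r * qbin ↑p2 ↑r *
              qbin ((j:ℤ) + ↑p + ↑p2 - ↑r - 1) (↑p + ↑p2))) = 0 := by
        have tele := Finset.sum_range_sub (f := fun r =>
          -(q^(j + r*(r-1)) * qint r ^ 2 * qbin ↑p ↑r * qbin ↑p2 ↑r *
            qbin ((j:ℤ) + ↑p + ↑p2 - ↑r) (↑p + ↑p2))) (n := p+p2+1)
        rw [show ∑ r ∈ range (p+p2+1),
            (qint j ^ 2 * (q^(r*r) * qbin ↑p ↑r * qbin ↑p2 ↑r *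
              qbin ((j:ℤ) + 1 + ↑p + ↑p2 - ↑r - 1) (↑p + ↑p2))
            - qint (j+p) * qint (j+p2) * (q^(r*r) * qbin ↑p ↑r * qbin ↑p2 ↑r *
              qbin ((j:ℤ) + ↑p + ↑p2 - ↑r - 1) (↑p + ↑p2)))
          = ∑ r ∈ range (p+p2+1),
            (-(q^(j + (r+1)*((r+1)-1)) * qint (r+1) ^ 2 * qbin ↑p ↑(r+1) * qbin ↑p2 ↑(r+1) *
              qbin ((j:ℤ) + ↑p + ↑p2 - ↑(r+1)) (↑p + ↑p2))
            - -(q^(j + r*(r-1)) * qint r ^ 2 * qbin ↑p ↑r * qbin ↑p2 ↑r *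
              qbin ((j:ℤ) + ↑p + ↑p2 - ↑r) (↑p + ↑p2))) from
          Finset.sum_congr rfl fun r _ => by
            rw [cert p p2 r j hj1, show ((r+1:ℕ):ℤ) = (r:ℤ) + 1 by push_cast; ring,
              Nat.add_sub_cancel,
              show ((j:ℕ):ℤ) + ↑p + ↑p2 - ((r:ℤ) + 1) = ((j:ℕ):ℤ) + ↑p + ↑p2 - ↑r - 1 by ring],
          tele]
        rw [qbin_zero_of_lt (show ((p:ℕ):ℤ) < ((p+p2+1:ℕ):ℤ) by push_cast; omega)]
        simp [qint_zero]
      rw [Finset.sum_sub_distrib, ← Finset.mul_sum, ← Finset.mul_sum, sub_eq_zero] at key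
      rw [← IH] at key
      -- key : qint j ^2 * Σ f_r(j+1) = qint (j+p) * qint (j+p2) * (binom j * binom j)
      have hL1 : qbin ((j:ℤ) + 1 + ↑p - 1) ↑p * qint j = qint (j+p) * qbin ((j:ℤ) + ↑p - 1) ↑p := by
        have h := ab1 (j-1+p) p
        rw [show j-1+p+1-p = j by omega, show j-1+p+1 = j+p by omega] at h
        rw [show ((j:ℕ):ℤ) + 1 + ↑p - 1 = ((j+p : ℕ):ℤ) by push_cast; ring,
          show ((j:ℕ):ℤ) + ↑p - 1 = ((j-1+p : ℕ):ℤ) by push_cast; omega]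
        exact h
      have hL2 : qbin ((j:ℤ) + 1 + ↑p2 - 1) ↑p2 * qint j = qint (j+p2) * qbin ((j:ℤ) + ↑p2 - 1) ↑p2 := by
        have h := ab1 (j-1+p2) p2
        rw [show j-1+p2+1-p2 = j by omega, show j-1+p2+1 = j+p2 by omega] at h
        rw [show ((j:ℕ):ℤ) + 1 + ↑p2 - 1 = ((j+p2 : ℕ):ℤ) by push_cast; ring,
          show ((j:ℕ):ℤ) + ↑p2 - 1 = ((j-1+p2 : ℕ):ℤ) by push_cast; omega]
        exact h
      apply mul_left_cancel₀ (pow_ne_zero 2 (qint_ne_zero (by omega : j ≠ 0)))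
      push_cast
      rw [key]
      linear_combination (qint j * qbin ((j:ℤ) + 1 + ↑p2 - 1) ↑p2) * hL1
        + (qint (j+p) * qbin ((j:ℤ) + ↑p - 1) ↑p) * hL2

theorem c_eq_gchoose (r1 r2 k : ℕ) (hr1 : 0 < r1) (hr2 : 0 < r2) (hk : 1 ≤ k)
    (hk2 : k ≤ r1 + r2) :
    (qint (r1 + r2) / qint k) *
        ∑ j ∈ Finset.range (k + 1),
          (-1 : RatFunc ℚ) ^ (k - j) * qbin k j * q ^ ((k - j) * (k - j - 1) / 2) *
            qbin ((j : ℤ) + r1 - 1) r1 * qbin ((j : ℤ) + r2 - 1) r2 =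
      q ^ ((k : ℤ) * ((k : ℤ) - 1) - (r1 : ℤ) * r2) * gchoose (r1 + r2) r1 k := by
  have h1 : ∀ j ∈ range (k + 1),
      (-1 : RatFunc ℚ) ^ (k - j) * qbin k j * q ^ ((k - j) * (k - j - 1) / 2) *
          qbin ((j : ℤ) + r1 - 1) r1 * qbin ((j : ℤ) + r2 - 1) r2
        = ∑ r ∈ range (r1 + r2 + 1),
            ((-1 : RatFunc ℚ) ^ (k - j) * qbin k j * q ^ ((k - j) * (k - j - 1) / 2)) *
              (q^(r*r) * qbin ↑r1 ↑r * qbin ↑r2 ↑r *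
                qbin ((j:ℤ) + ↑r1 + ↑r2 - ↑r - 1) (↑r1 + ↑r2)) := by
    intro j _
    rw [show (-1 : RatFunc ℚ) ^ (k - j) * qbin k j * q ^ ((k - j) * (k - j - 1) / 2) *
          qbin ((j : ℤ) + r1 - 1) r1 * qbin ((j : ℤ) + r2 - 1) r2
        = ((-1 : RatFunc ℚ) ^ (k - j) * qbin k j * q ^ ((k - j) * (k - j - 1) / 2)) *
          (qbin ((j : ℤ) + r1 - 1) r1 * qbin ((j : ℤ) + r2 - 1) r2) by ring,
      saal r1 r2 hr1 hr2 j, Finset.mul_sum]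
  rw [Finset.sum_congr rfl h1, Finset.sum_comm]
  have h2 : ∀ r ∈ range (r1 + r2 + 1),
      ∑ j ∈ range (k + 1),
          ((-1 : RatFunc ℚ) ^ (k - j) * qbin k j * q ^ ((k - j) * (k - j - 1) / 2)) *
            (q^(r*r) * qbin ↑r1 ↑r * qbin ↑r2 ↑r *
              qbin ((j:ℤ) + ↑r1 + ↑r2 - ↑r - 1) (↑r1 + ↑r2))
        = q ^ ((k : ℤ) * ((k : ℤ) - 1) - (r1 : ℤ) * r2) *
            (qbin ↑r1 ↑r * qbin ((↑(r1+r2) : ℤ) - ↑r1) ↑r *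
              qbin ((↑(r1+r2) : ℤ) - ↑r - 1) ((k : ℤ) - ↑r - 1) *
              q ^ (((↑(r1+r2) : ℤ) - ↑r1) * ↑r1 + (r : ℤ) * ((r : ℤ) - ↑k))) := by
    intro r _
    have hstep : ∀ j ∈ range (k+1),
        ((-1 : RatFunc ℚ) ^ (k - j) * qbin k j * q ^ ((k - j) * (k - j - 1) / 2)) *
            (q^(r*r) * qbin ↑r1 ↑r * qbin ↑r2 ↑r *
              qbin ((j:ℤ) + ↑r1 + ↑r2 - ↑r - 1) (↑r1 + ↑r2))
          = (q^(r*r) * qbin ↑r1 ↑r * qbin ↑r2 ↑r) *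
            ((-1 : RatFunc ℚ) ^ (k - j) * qbin k j * q ^ ((k - j) * (k - j - 1) / 2) *
              qbin ((j:ℤ) + ((↑(r1+r2) : ℤ) - ↑r - 1)) ↑(r1+r2)) := by
      intro j _
      rw [show ((j:ℤ) + ↑r1 + ↑r2 - ↑r - 1) = (j:ℤ) + ((↑(r1+r2) : ℤ) - ↑r - 1) by
          push_cast; ring,
        show ((r1:ℤ) + ↑r2) = ((r1+r2 : ℕ) : ℤ) by push_cast; ring]
      ring
    rw [Finset.sum_congr rfl hstep, ← Finset.mul_sum,
      Wlem (r1+r2) k hk2 ((↑(r1+r2) : ℤ) - ↑r - 1),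
      qbin_symm ((↑(r1+r2) : ℤ) - ↑r - 1) ((↑(r1+r2) : ℤ) - ↑k),
      show ((↑(r1+r2) : ℤ) - ↑r - 1) - ((↑(r1+r2) : ℤ) - ↑k) = (k:ℤ) - ↑r - 1 by ring,
      show ((↑(r1+r2) : ℤ) - ↑r1) = (r2:ℤ) by push_cast; ring]
    have hexp : q^(r*r) * q^((k : ℤ) * (((↑(r1+r2) : ℤ) - ↑r - 1) + ↑k - ↑(r1+r2)))
        = q ^ ((k : ℤ) * ((k : ℤ) - 1) - (r1 : ℤ) * r2) *
          q ^ ((r2 : ℤ) * ↑r1 + (r : ℤ) * ((r : ℤ) - ↑k)) := by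
      rw [show (q^(r*r) : RatFunc ℚ) = q^((r*r : ℕ) : ℤ) from (zpow_natCast q (r*r)).symm,
        ← zpow_add₀ q_ne_zero, ← zpow_add₀ q_ne_zero]
      congr 1
      push_cast
      ring
    linear_combination (qbin ↑r1 ↑r * qbin (↑r2 : ℤ) ↑r *
      qbin ((↑(r1+r2) : ℤ) - ↑r - 1) ((k : ℤ) - ↑r - 1)) * hexp
  rw [Finset.sum_congr rfl h2, ← Finset.mul_sum, gchoose]
  ring
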